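/- Let ν, κ, γ, a, b, 𝒞 be positive real constants, let ϱ ≥ 0, and define c₁ = (b + γ/(3𝒞))/(3b𝒞 + 2γ), c₂ = 1/(3b𝒞 + 2γ), c₃ = (2κb𝒞 + 2aγ)/(3b𝒞 + 2γ), c₄ = (6a𝒞 − 4κ𝒞)/(3b𝒞 + 2γ), c₅(ϱ) = (4κγ + 9ab𝒞)ϱ²/(3(3b𝒞 + 2γ)) + (2/3)γ + b𝒞, c₆ = (2κγb − 3abγ)/(3(3b𝒞 + 2γ)). Suppose ρ, d, Θ, Ξ, 𝒮¹, 𝒮², 𝒮³, 𝒮⁴ : [0, ∞) → ℂ are functions with ρ, d, Θ, Ξ differentiable, satisfying for all t ≥ 0: ρ′ + ϱd = 𝒮¹; d′ − ϱρ + νϱ²d − c₁ϱΘ − c₂ϱΞ = 𝒮²; Θ′ + 2𝒞ϱd + c₃ϱ²Θ − c₄ϱ²Ξ = 𝒮³; Ξ′ + (2γ/3)ϱd + c₅(ϱ)Ξ − c₆ϱ²Θ = 𝒮⁴. Then for all t ≥ 0: (1/2)·d/dt[ |ρ|² + |d|² + (c₁/(2𝒞))|Θ|² + (3c₂/(2γ))|Ξ|²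 ] + νϱ²|d|² + (c₁c₃/(2𝒞))ϱ²|Θ|² + (3c₂c₅(ϱ)/(2γ))|Ξ|² = ( c₁c₄/(2𝒞) + 3c₂c₆/(2γ) )·ϱ²·Re(Θ·conj(Ξ)) + Re(𝒮¹·conj(ρ)) + Re(𝒮²·conj(d)) + (c₁/(2𝒞))·Re(𝒮³·conj(Θ)) + (3c₂/(2γ))·Re(𝒮⁴·conj(Ξ)). -/

import Mathlib

open Complex Set

lemma hsq_aux {f : ℝ → ℂ} {f' : ℂ} {s : Set ℝ} {t : ℝ} (hf : HasDerivWithinAt f f' s t) :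
    HasDerivWithinAt (fun x => ‖f x‖ ^ 2) (2 * (f' * (starRingEnd ℂ) (f t)).re) s t := by
  have h1 : HasDerivWithinAt (fun x => f x * star (f x))
      (f' * star (f t) + f t * star f') s t := hf.mul hf.star
  have h2 := Complex.reCLM.hasFDerivAt.comp_hasDerivWithinAt t h1
  convert h2 using 1
  · rfl
  · rfl
  · funext x
    simp only [Function.comp_apply, Complex.reCLM_apply, ← starRingEnd_apply,
      Complex.mul_conj]
    rw [Complex.ofReal_re, Complex.normSq_eq_norm_sq]
  · simp only [Complex.reCLM_apply, ← starRingEnd_apply, Complex.add_re,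
      Complex.mul_re, Complex.conj_re, Complex.conj_im]
    ring

theorem fourier_energy_identity (ν κ γ a b 𝒞 ϱ : ℝ)
    (hν : 0 < ν) (hκ : 0 < κ) (hγ : 0 < γ) (ha : 0 < a) (hb : 0 < b) (h𝒞 : 0 < 𝒞)
    (hϱ : 0 ≤ ϱ)
    (c₁ c₂ c₃ c₄ c₅ c₆ : ℝ)
    (hc₁ : c₁ = (b + γ / (3 * 𝒞)) / (3 * b * 𝒞 + 2 * γ))
    (hc₂ : c₂ = 1 / (3 * b * 𝒞 + 2 * γ))
    (hc₃ : c₃ = (2 * κ * b * 𝒞 + 2 * a * γ) / (3 * b * 𝒞 + 2 * γ))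
    (hc₄ : c₄ = (6 * a * 𝒞 - 4 * κ * 𝒞) / (3 * b * 𝒞 + 2 * γ))
    (hc₅ : c₅ = (4 * κ * γ + 9 * a * b * 𝒞) * ϱ ^ 2 / (3 * (3 * b * 𝒞 + 2 * γ))
          + (2 / 3) * γ + b * 𝒞)
    (hc₆ : c₆ = (2 * κ * γ * b - 3 * a * b * γ) / (3 * (3 * b * 𝒞 + 2 * γ)))
    (ρ d Θ Ξ ρ' d' Θ' Ξ' S1 S2 S3 S4 : ℝ → ℂ)
    (hρ : ∀ t ∈ Ici (0 : ℝ), HasDerivWithinAt ρ (ρ' t) (Ici 0) t)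
    (hd : ∀ t ∈ Ici (0 : ℝ), HasDerivWithinAt d (d' t) (Ici 0) t)
    (hΘ : ∀ t ∈ Ici (0 : ℝ), HasDerivWithinAt Θ (Θ' t) (Ici 0) t)
    (hΞ : ∀ t ∈ Ici (0 : ℝ), HasDerivWithinAt Ξ (Ξ' t) (Ici 0) t)
    (heq1 : ∀ t : ℝ, 0 ≤ t → ρ' t + (ϱ : ℂ) * d t = S1 t)
    (heq2 : ∀ t : ℝ, 0 ≤ t →
      d' t - (ϱ : ℂ) * ρ t + (ν * ϱ ^ 2 : ℝ) * d t - (c₁ * ϱ : ℝ) * Θ t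
        - (c₂ * ϱ : ℝ) * Ξ t = S2 t)
    (heq3 : ∀ t : ℝ, 0 ≤ t →
      Θ' t + (2 * 𝒞 * ϱ : ℝ) * d t + (c₃ * ϱ ^ 2 : ℝ) * Θ t
        - (c₄ * ϱ ^ 2 : ℝ) * Ξ t = S3 t)
    (heq4 : ∀ t : ℝ, 0 ≤ t →
      Ξ' t + (2 * γ / 3 * ϱ : ℝ) * d t + (c₅ : ℝ) * Ξ t - (c₆ * ϱ ^ 2 : ℝ) * Θ t = S4 t) :
    ∀ t : ℝ, 0 ≤ t →
      HasDerivWithinAt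
        (fun s => (1 / 2) * (‖ρ s‖ ^ 2 + ‖d s‖ ^ 2 + (c₁ / (2 * 𝒞)) * ‖Θ s‖ ^ 2
          + (3 * c₂ / (2 * γ)) * ‖Ξ s‖ ^ 2))
        ((c₁ * c₄ / (2 * 𝒞) + 3 * c₂ * c₆ / (2 * γ)) * ϱ ^ 2
            * (Θ t * (starRingEnd ℂ) (Ξ t)).re
          + (S1 t * (starRingEnd ℂ) (ρ t)).re
          + (S2 t * (starRingEnd ℂ) (d t)).re
          + (c₁ / (2 * 𝒞)) * (S3 t * (starRingEnd ℂ) (Θ t)).re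
          + (3 * c₂ / (2 * γ)) * (S4 t * (starRingEnd ℂ) (Ξ t)).re
          - (ν * ϱ ^ 2 * ‖d t‖ ^ 2 + (c₁ * c₃ / (2 * 𝒞)) * ϱ ^ 2 * ‖Θ t‖ ^ 2
            + (3 * c₂ * c₅ / (2 * γ)) * ‖Ξ t‖ ^ 2))
        (Ici 0) t := by
  intro t ht
  have Hρ := hsq_aux (hρ t ht)
  have Hd := hsq_aux (hd t ht)
  have HΘ := hsq_aux (hΘ t ht)
  have HΞ := hsq_aux (hΞ t ht)
  have H := (((Hρ.add Hd).add (HΘ.const_mul (c₁ / (2 * 𝒞)))).add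
      (HΞ.const_mul (3 * c₂ / (2 * γ)))).const_mul (1 / 2)
  convert H using 1
  · rfl
  · rfl
  · rfl
  -- now: real equality of derivative values
  have e1 : ρ' t = S1 t - (ϱ : ℂ) * d t := by linear_combination heq1 t ht
  have e2 : d' t = S2 t + (ϱ : ℂ) * ρ t - (ν * ϱ ^ 2 : ℝ) * d t + (c₁ * ϱ : ℝ) * Θ t
      + (c₂ * ϱ : ℝ) * Ξ t := by linear_combination heq2 t ht
  have e3 : Θ' t = S3 t - (2 * 𝒞 * ϱ : ℝ) * d t - (c₃ * ϱ ^ 2 : ℝ) * Θ t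
      + (c₄ * ϱ ^ 2 : ℝ) * Ξ t := by linear_combination heq3 t ht
  have e4 : Ξ' t = S4 t - (2 * γ / 3 * ϱ : ℝ) * d t - (c₅ : ℝ) * Ξ t
      + (c₆ * ϱ ^ 2 : ℝ) * Θ t := by linear_combination heq4 t ht
  rw [e1, e2, e3, e4]
  simp only [Complex.sq_norm, Complex.normSq_apply,
    Complex.add_re, Complex.sub_re, Complex.mul_re, Complex.mul_im,
    Complex.conj_re, Complex.conj_im, Complex.ofReal_re, Complex.ofReal_im]
  field_simp
  simp only [Complex.add_im, Complex.sub_im, Complex.neg_im, Complex.mul_im, Complex.mul_re,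
    Complex.ofReal_re, Complex.ofReal_im]
  ring
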